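/- Let S be a finite interval of integers, let k < l be integers with {2k, …, 2l} ⊆ S, and let f ∈ Ξ̂_{k,l}. Then for every integer i with {2i−1, 2i, 2i+1} ⊆ S, the operators q_{2i} = c_{2i+1} c*_{2i} c_{2i−1} and Q(f) anticommute: q_{2i} Q(f) + Q(f) q_{2i} = 0, and likewise q_{2i}* Q(f) + Q(f) q_{2i}* = 0. -/

import Mathlib

namespace Nicolai

/-- Configurations on the finite interval `S = {a, …, b}` of integers:
`true` = occupied, `false` = empty. -/
abbrev Config (a b : ℤ) : Type := {i : ℤ // i ∈ Finset.Icc a b} → Bool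

/-- The Hilbert space `ℋ_S` with orthonormal basis indexed by configurations. -/
abbrev Hs (a b : ℤ) : Type := EuclideanSpace ℂ (Config a b)

/-- The basis vector `e_g` associated to the configuration `g`. -/
noncomputable def e (a b : ℤ) (g : Config a b) : Hs a b := EuclideanSpace.single g 1

/-- The Jordan–Wigner sign exponent: the number of occupied sites strictly to the left of `i`. -/
noncomputable def signCount (a b : ℤ) (g : Config a b) (i : ℤ) : ℕ :=
  (Finset.univ.filter fun j : {x : ℤ // x ∈ Finset.Icc a b} => j.1 < i ∧ g j = true).card

/-- The annihilation operator `c_i` (zero if `i ∉ S`). -/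
noncomputable def cAnn (a b : ℤ) (i : ℤ) : Module.End ℂ (Hs a b) where
  toFun ψ := WithLp.toLp 2 fun g =>
    if hi : i ∈ Finset.Icc a b then
      if g ⟨i, hi⟩ = false then
        ((-1 : ℂ) ^ signCount a b g i) * ψ (Function.update g ⟨i, hi⟩ true)
      else 0
    else 0
  map_add' ψ φ := by
    ext g
    simp only [PiLp.add_apply, PiLp.toLp_apply]
    split_ifs <;> simp [mul_add]
  map_smul' c ψ := by
    ext g
    simp only [PiLp.smul_apply, PiLp.toLp_apply, smul_eq_mul, RingHom.id_apply]
    split_ifs <;> ring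

/-- The creation operator `c*_i` (zero if `i ∉ S`). -/
noncomputable def cCr (a b : ℤ) (i : ℤ) : Module.End ℂ (Hs a b) where
  toFun ψ := WithLp.toLp 2 fun g =>
    if hi : i ∈ Finset.Icc a b then
      if g ⟨i, hi⟩ = true then
        ((-1 : ℂ) ^ signCount a b g i) * ψ (Function.update g ⟨i, hi⟩ false)
      else 0
    else 0
  map_add' ψ φ := by
    ext g
    simp only [PiLp.add_apply, PiLp.toLp_apply]
    split_ifs <;> simp [mul_add]
  map_smul' c ψ := by
    ext g
    simp only [PiLp.smul_apply, PiLp.toLp_apply, smul_eq_mul, RingHom.id_apply]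
    split_ifs <;> ring

/-- `q_{2i} = c_{2i+1} c*_{2i} c_{2i−1}`. -/
noncomputable def qOp (a b i : ℤ) : Module.End ℂ (Hs a b) :=
  cAnn a b (2 * i + 1) * cCr a b (2 * i) * cAnn a b (2 * i - 1)

/-- The Nicolai supercharge `Q[k,l] = Σ_{i=k}^{l} q_{2i}`. -/
noncomputable def QNic (a b k l : ℤ) : Module.End ℂ (Hs a b) :=
  ∑ i ∈ Finset.Icc k l, qOp a b i

/-- Membership in `Ξ̂_{k,l}`: a `{−1,+1}`-valued function on `{2k, …, 2l}` with no
forbidden sign triplet at interior even sites, constant on each two-site edge. -/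
def memXi (k l : ℤ) (f : ℤ → ℤ) : Prop :=
  (∀ i ∈ Finset.Icc (2 * k) (2 * l), f i = 1 ∨ f i = -1) ∧
  (∀ i : ℤ, k < i → i < l →
    ¬(f (2 * i - 1) = -1 ∧ f (2 * i) = 1 ∧ f (2 * i + 1) = -1) ∧
    ¬(f (2 * i - 1) = 1 ∧ f (2 * i) = -1 ∧ f (2 * i + 1) = 1)) ∧
  f (2 * k) = f (2 * k + 1) ∧ f (2 * l - 1) = f (2 * l)

/-- `ζ_i(+1) = c*_i`, `ζ_i(−1) = c_i`. -/
noncomputable def zeta (a b i : ℤ) (v : ℤ) : Module.End ℂ (Hs a b) :=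
  if v = 1 then cCr a b i else if v = -1 then cAnn a b i else 0

/-- The local fermion operator `Q(f) = ζ_{2k}(f(2k)) ζ_{2k+1}(f(2k+1)) ⋯ ζ_{2l}(f(2l))`,
the product taken in increasing site order. -/
noncomputable def QF (a b k l : ℤ) (f : ℤ → ℤ) : Module.End ℂ (Hs a b) :=
  ((List.range (2 * l - 2 * k + 1).toNat).map
    (fun j => zeta a b (2 * k + (j : ℤ)) (f (2 * k + (j : ℤ))))).prod

/-- `g` has a forbidden triplet at the even site `2i`. -/
def forbiddenAt (g : ℤ → Bool) (i : ℤ) : Prop :=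
  (g (2 * i - 1) = false ∧ g (2 * i) = true ∧ g (2 * i + 1) = false) ∨
  (g (2 * i - 1) = true ∧ g (2 * i) = false ∧ g (2 * i + 1) = true)

/-- Membership in `Υ̂_{k,l}`: no forbidden triplet at interior even sites and the
open SUSY boundary condition (only the values on `{2k, …, 2l}` are relevant). -/
def memUps (k l : ℤ) (g : ℤ → Bool) : Prop :=
  (∀ i : ℤ, k < i → i < l → ¬ forbiddenAt g i) ∧
  g (2 * k) = g (2 * k + 1) ∧ g (2 * l - 1) = g (2 * l)

/-- Extend a configuration on `S` to all of `ℤ` by `false`. -/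
noncomputable def ext (a b : ℤ) (g : Config a b) : ℤ → Bool :=
  fun i => if h : i ∈ Finset.Icc a b then g ⟨i, h⟩ else false

/-- The charge `f ∈ Ξ̂_{k,l}` is applicable to the configuration `g`. -/
def applicable (k l : ℤ) (f : ℤ → ℤ) (g : ℤ → Bool) : Prop :=
  ∀ i : ℤ, 2 * k ≤ i → i ≤ 2 * l → (f i = 1 → g i = false) ∧ (f i = -1 → g i = true)

/-- The configuration `f·g` resulting from the action of the charge `f ∈ Ξ̂_{k,l}` on `g`. -/
def applyCharge (k l : ℤ) (f : ℤ → ℤ) (g : ℤ → Bool) : ℤ → Bool :=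
  fun i => if 2 * k ≤ i ∧ i ≤ 2 * l then decide (f i = 1) else g i

/-- `Reachable p q g₀ g`: `g` is obtained from `g₀` by finitely many applications of
applicable charges from `Ξ̂(p,q) = ⋃_{p ≤ k < l ≤ q} Ξ̂_{k,l}`. -/
inductive Reachable (p q : ℤ) : (ℤ → Bool) → (ℤ → Bool) → Prop
  | refl (g : ℤ → Bool) : Reachable p q g g
  | step {g₀ g : ℤ → Bool} (k l : ℤ) (f : ℤ → ℤ) :
      Reachable p q g₀ g → p ≤ k → k < l → l ≤ q → memXi k l f → applicable k l f g →
      Reachable p q g₀ (applyCharge k l f g)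

/-- The fermion parity operator `P e_g = (−1)^{#occupied sites} e_g`. -/
noncomputable def parity (a b : ℤ) : Module.End ℂ (Hs a b) where
  toFun ψ := WithLp.toLp 2 fun g =>
    ((-1 : ℂ) ^ (Finset.univ.filter fun j : {x : ℤ // x ∈ Finset.Icc a b} => g j = true).card)
      * ψ g
  map_add' ψ φ := by
    ext g
    simp only [PiLp.add_apply, PiLp.toLp_apply]
    ring
  map_smul' c ψ := by
    ext g
    simp only [PiLp.smul_apply, PiLp.toLp_apply, smul_eq_mul, RingHom.id_apply]
    ring

noncomputable def lad (a b i : ℤ) (v : Bool) : Module.End ℂ (Hs a b) :=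
  if v then cCr a b i else cAnn a b i

lemma lad_apply (a b i : ℤ) (v : Bool) (ψ : Hs a b) (g : Config a b) :
    lad a b i v ψ g =
      if hi : i ∈ Finset.Icc a b then
        if g ⟨i, hi⟩ = v then
          ((-1 : ℂ) ^ signCount a b g i) * ψ (Function.update g ⟨i, hi⟩ (!v))
        else 0
      else 0 := by
  cases v <;> rfl

lemma lad_not_mem (a b i : ℤ) (v : Bool) (hi : i ∉ Finset.Icc a b) :
    lad a b i v = 0 := by
  apply LinearMap.ext; intro ψ
  ext g
  rw [lad_apply, dif_neg hi]
  rfl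

lemma signCount_update_add (a b : ℤ) (g : Config a b) (j : ℤ) (hj : j ∈ Finset.Icc a b)
    (u : Bool) (i : ℤ) :
    signCount a b (Function.update g ⟨j, hj⟩ u) i
      + (if j < i ∧ g ⟨j, hj⟩ = true then 1 else 0)
    = signCount a b g i + (if j < i ∧ u = true then 1 else 0) := by
  classical
  unfold signCount
  rw [Finset.card_filter, Finset.card_filter,
    ← Finset.sum_erase_add _ _ (Finset.mem_univ (⟨j, hj⟩ : {x : ℤ // x ∈ Finset.Icc a b})),
    ← Finset.sum_erase_add _ _ (Finset.mem_univ (⟨j, hj⟩ : {x : ℤ // x ∈ Finset.Icc a b}))]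
  have h1 : ∀ x ∈ Finset.univ.erase (⟨j, hj⟩ : {x : ℤ // x ∈ Finset.Icc a b}),
      (if x.1 < i ∧ Function.update g ⟨j, hj⟩ u x = true then 1 else 0)
        = (if x.1 < i ∧ g x = true then 1 else 0) := by
    intro x hx
    rw [Function.update_of_ne (Finset.ne_of_mem_erase hx)]
  rw [Finset.sum_congr rfl h1, Function.update_self]
  simp only [Subtype.coe_mk]
  omega

lemma neg_one_pow_signCount_update (a b : ℤ) (g : Config a b) (j : ℤ)
    (hj : j ∈ Finset.Icc a b) (u : Bool) (i : ℤ) :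
    ((-1 : ℂ) ^ signCount a b (Function.update g ⟨j, hj⟩ u) i)
      * (if j < i ∧ g ⟨j, hj⟩ = true then (-1 : ℂ) else 1)
    = ((-1 : ℂ) ^ signCount a b g i) * (if j < i ∧ u = true then (-1 : ℂ) else 1) := by
  have h := signCount_update_add a b g j hj u i
  have e1 : ∀ (p : Prop) [Decidable p] (n : ℕ),
      ((-1 : ℂ) ^ n) * (if p then (-1 : ℂ) else 1) = (-1 : ℂ) ^ (n + if p then 1 else 0) := by
    intro p _ n
    split_ifs <;> simp [pow_add]
  rw [e1, e1, h]

lemma lad_anticomm (a b i j : ℤ) (hij : i ≠ j) (v w : Bool) :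
    lad a b i v * lad a b j w = -(lad a b j w * lad a b i v) := by
  by_cases hi : i ∈ Finset.Icc a b
  swap
  · simp [lad_not_mem a b i v hi]
  by_cases hj : j ∈ Finset.Icc a b
  swap
  · simp [lad_not_mem a b j w hj]
  have hne : (⟨i, hi⟩ : {x : ℤ // x ∈ Finset.Icc a b}) ≠ ⟨j, hj⟩ := by
    simp only [ne_eq, Subtype.mk.injEq]; exact hij
  apply LinearMap.ext; intro ψ
  ext g
  rw [Module.End.mul_apply, LinearMap.neg_apply, Module.End.mul_apply, PiLp.neg_apply]
  rw [lad_apply a b i v _ g, lad_apply a b j w _ g, dif_pos hi, dif_pos hj]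
  by_cases hgi : g ⟨i, hi⟩ = v
  · by_cases hgj : g ⟨j, hj⟩ = w
    · rw [if_pos hgi, if_pos hgj]
      have e1 : lad a b j w ψ (Function.update g ⟨i, hi⟩ (!v))
          = (-1 : ℂ) ^ signCount a b (Function.update g ⟨i, hi⟩ (!v)) j
            * ψ (Function.update (Function.update g ⟨j, hj⟩ (!w)) ⟨i, hi⟩ (!v)) := by
        rw [lad_apply, dif_pos hj, Function.update_of_ne hne.symm, if_pos hgj,
          Function.update_comm hne]
      have e2 : lad a b i v ψ (Function.update g ⟨j, hj⟩ (!w))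
          = (-1 : ℂ) ^ signCount a b (Function.update g ⟨j, hj⟩ (!w)) i
            * ψ (Function.update (Function.update g ⟨j, hj⟩ (!w)) ⟨i, hi⟩ (!v)) := by
        rw [lad_apply, dif_pos hi, Function.update_of_ne hne, if_pos hgi]
      rw [e1, e2]
      have H1 := neg_one_pow_signCount_update a b g i hi (!v) j
      have H2 := neg_one_pow_signCount_update a b g j hj (!w) i
      rcases lt_or_gt_of_ne hij with h | h
      · have h' : ¬ j < i := by omega
        rw [if_neg (by simp [h']), if_neg (by simp [h'])] at H2
        have hX : (-1 : ℂ) ^ signCount a b (Function.update g ⟨i, hi⟩ (!v)) j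
            = -((-1 : ℂ) ^ signCount a b g j) := by
          cases v
          · rw [if_neg (by simp [hgi]), if_pos (by simp [h])] at H1
            linear_combination H1
          · rw [if_pos (by simp [h, hgi]), if_neg (by simp)] at H1
            linear_combination -H1
        have hY : (-1 : ℂ) ^ signCount a b (Function.update g ⟨j, hj⟩ (!w)) i
            = (-1 : ℂ) ^ signCount a b g i := by linear_combination H2
        rw [hX, hY]; ring
      · have h' : ¬ i < j := by omega
        rw [if_neg (by simp [h']), if_neg (by simp [h'])] at H1
        have hY : (-1 : ℂ) ^ signCount a b (Function.update g ⟨j, hj⟩ (!w)) i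
            = -((-1 : ℂ) ^ signCount a b g i) := by
          cases w
          · rw [if_neg (by simp [hgj]), if_pos (by simp [h])] at H2
            linear_combination H2
          · rw [if_pos (by simp [h, hgj]), if_neg (by simp)] at H2
            linear_combination -H2
        have hX : (-1 : ℂ) ^ signCount a b (Function.update g ⟨i, hi⟩ (!v)) j
            = (-1 : ℂ) ^ signCount a b g j := by linear_combination H1
        rw [hX, hY]; ring
    · rw [if_neg hgj]
      have e0 : lad a b j w ψ (Function.update g ⟨i, hi⟩ (!v)) = 0 := by
        rw [lad_apply, dif_pos hj, Function.update_of_ne hne.symm, if_neg hgj]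
      rw [e0]
      split_ifs <;> simp
  · rw [if_neg hgi]
    have e0 : lad a b i v ψ (Function.update g ⟨j, hj⟩ (!w)) = 0 := by
      rw [lad_apply, dif_pos hi, Function.update_of_ne hne, if_neg hgi]
    rw [e0]
    split_ifs <;> simp

lemma cCr_eq_lad (a b i : ℤ) : cCr a b i = lad a b i true := rfl
lemma cAnn_eq_lad (a b i : ℤ) : cAnn a b i = lad a b i false := rfl

lemma qOp_eq_lad (a b i : ℤ) :
    qOp a b i = lad a b (2*i+1) false * lad a b (2*i) true * lad a b (2*i-1) false := rfl

-- generic products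

lemma mul_prod_anticomm {M : Type*} [Ring M] (X : M) :
    ∀ (L : List M), (∀ z ∈ L, X * z = -(z * X)) →
      (Odd L.length → X * L.prod = -(L.prod * X)) ∧
      (Even L.length → X * L.prod = L.prod * X) := by
  intro L
  induction L with
  | nil =>
    intro _
    constructor
    · intro hodd; exact absurd hodd (by simp)
    · intro _; simp
  | cons z t ih =>
    intro h
    obtain ⟨ih1, ih2⟩ := ih (fun y hy => h y (List.mem_cons_of_mem _ hy))
    have hz := h z (List.mem_cons_self)
    constructor
    · intro hodd
      have ht : Even t.length := by
        simp only [List.length_cons] at hodd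
        rcases Nat.even_or_odd t.length with he | ho
        · exact he
        · exact absurd hodd (by simp [Nat.odd_add_one, ho])
      simp only [List.prod_cons]
      rw [← mul_assoc, hz, neg_mul, mul_assoc, ih2 ht, ← mul_assoc]
    · intro heven
      have ht : Odd t.length := by
        simp only [List.length_cons, Nat.even_add_one] at heven
        exact Nat.not_even_iff_odd.mp heven
      simp only [List.prod_cons]
      rw [← mul_assoc, hz, neg_mul, mul_assoc, ih1 ht, mul_neg, neg_neg, ← mul_assoc]

lemma triple_anticomm {M : Type*} [Ring M] (A B C P : M)
    (hA : A * P = -(P * A)) (hB : B * P = -(P * B)) (hC : C * P = -(P * C)) :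
    (A * B * C) * P = -(P * (A * B * C)) := by
  calc A * B * C * P = A * B * (C * P) := by noncomm_ring
    _ = A * B * (-(P * C)) := by rw [hC]
    _ = -(A * (B * P) * C) := by noncomm_ring
    _ = -(A * (-(P * B)) * C) := by rw [hB]
    _ = (A * P) * (B * C) := by noncomm_ring
    _ = (-(P * A)) * (B * C) := by rw [hA]
    _ = -(P * (A * B * C)) := by noncomm_ring

-- plist

noncomputable def plist (a b : ℤ) (f : ℤ → ℤ) (c : ℤ) (n : ℕ) : Module.End ℂ (Hs a b) :=
  ((List.range n).map (fun j : ℕ => zeta a b (c + (j : ℤ)) (f (c + (j : ℤ))))).prod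

lemma castlist_eq_map (n : ℕ) :
    (do let a ← List.range n; pure ((a : ℤ))) = List.map (fun a : ℕ => (a : ℤ)) (List.range n) := by
  induction List.range n with
  | nil => rfl
  | cons x t ih => simp_all [List.flatMap_cons]

lemma QF_eq_plist (a b k l : ℤ) (f : ℤ → ℤ) :
    QF a b k l f = plist a b f (2 * k) (2 * l - 2 * k + 1).toNat := by
  unfold QF plist
  rw [castlist_eq_map, List.map_map]
  rfl

lemma plist_zero (a b : ℤ) (f : ℤ → ℤ) (c : ℤ) : plist a b f c 0 = 1 := by
  simp [plist]

lemma plist_succ (a b : ℤ) (f : ℤ → ℤ) (c : ℤ) (n : ℕ) :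
    plist a b f c (n + 1) = zeta a b c (f c) * plist a b f (c + 1) n := by
  unfold plist
  rw [List.range_succ_eq_map, List.map_cons, List.prod_cons, List.map_map]
  simp only [Nat.cast_zero, add_zero]
  refine congrArg (fun t => zeta a b c (f c) * t) ?_
  exact congrArg List.prod (List.map_congr_left (fun j _ => by
    simp only [Function.comp_apply]
    have : c + ((j.succ : ℕ) : ℤ) = c + 1 + (j : ℤ) := by push_cast; ring
    rw [this]))

def canon (a b : ℤ) (f : ℤ → ℤ) (c : ℤ) (n : ℕ) (g : Config a b) : Config a b :=
  fun x => if c ≤ x.1 ∧ x.1 < c + n then !(decide (f x.1 = 1)) else g x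

lemma canon_zero (a b : ℤ) (f : ℤ → ℤ) (c : ℤ) (g : Config a b) :
    canon a b f c 0 g = g := by
  funext x
  simp only [canon]
  rw [if_neg (by push_cast; omega)]

lemma canon_step (a b : ℤ) (f : ℤ → ℤ) (c : ℤ) (n : ℕ) (g : Config a b)
    (hc : c ∈ Finset.Icc a b) (u : Bool) (hu : u = !(decide (f c = 1))) :
    canon a b f (c + 1) n (Function.update g ⟨c, hc⟩ u) = canon a b f c (n + 1) g := by
  funext x
  simp only [canon]
  by_cases hx : c + 1 ≤ x.1 ∧ x.1 < c + 1 + (n : ℤ)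
  · rw [if_pos hx, if_pos (by push_cast; push_cast at hx; omega)]
  · rw [if_neg hx]
    by_cases hxc : x.1 = c
    · have hxx : x = ⟨c, hc⟩ := Subtype.ext hxc
      rw [if_pos (by push_cast; omega), hxx, Function.update_self, hu]
    · rw [Function.update_of_ne (by simp [Subtype.ext_iff, hxc]),
        if_neg (by push_cast; push_cast at hx; omega)]

lemma plist_struct (a b : ℤ) (f : ℤ → ℤ) :
    ∀ (n : ℕ) (c : ℤ) (ψ : Hs a b) (g : Config a b),
      (plist a b f c n ψ) g = 0 ∨
        ∃ s : ℂ, (plist a b f c n ψ) g = s * ψ (canon a b f c n g) := by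
  intro n
  induction n with
  | zero =>
    intro c ψ g
    right
    exact ⟨1, by rw [plist_zero, canon_zero]; simp⟩
  | succ n ih =>
    intro c ψ g
    rw [plist_succ, Module.End.mul_apply]
    by_cases h1 : f c = 1
    · rw [show zeta a b c (f c) = lad a b c true by simp [zeta, h1, cCr_eq_lad], lad_apply]
      by_cases hc : c ∈ Finset.Icc a b
      · rw [dif_pos hc]
        by_cases hg : g ⟨c, hc⟩ = true
        · rw [if_pos hg]
          rcases ih (c + 1) ψ (Function.update g ⟨c, hc⟩ (!true)) with h0 | ⟨s, hs⟩
          · left; rw [h0, mul_zero]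
          · right
            refine ⟨(-1) ^ signCount a b g c * s, ?_⟩
            rw [hs, canon_step a b f c n g hc (!true) (by simp [h1])]
            ring
        · rw [if_neg hg]; left; rfl
      · rw [dif_neg hc]; left; rfl
    · by_cases h2 : f c = -1
      · rw [show zeta a b c (f c) = lad a b c false by simp [zeta, h1, h2, cAnn_eq_lad], lad_apply]
        by_cases hc : c ∈ Finset.Icc a b
        · rw [dif_pos hc]
          by_cases hg : g ⟨c, hc⟩ = false
          · rw [if_pos hg]
            rcases ih (c + 1) ψ (Function.update g ⟨c, hc⟩ (!false)) with h0 | ⟨s, hs⟩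
            · left; rw [h0, mul_zero]
            · right
              refine ⟨(-1) ^ signCount a b g c * s, ?_⟩
              rw [hs, canon_step a b f c n g hc (!false) (by simp [h1])]
              ring
          · rw [if_neg hg]; left; rfl
        · rw [dif_neg hc]; left; rfl
      · left
        rw [show zeta a b c (f c) = 0 by simp [zeta, h1, h2]]
        simp

lemma plist_bad (a b : ℤ) (f : ℤ → ℤ) :
    ∀ (n : ℕ) (c : ℤ) (m : ℤ) (hmS : m ∈ Finset.Icc a b), c ≤ m → m < c + n →
      ∀ (ψ : Hs a b) (g : Config a b),
      ((f m = 1 ∧ g ⟨m, hmS⟩ = false) ∨ (f m = -1 ∧ g ⟨m, hmS⟩ = true)) →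
      (plist a b f c n ψ) g = 0 := by
  intro n
  induction n with
  | zero =>
    intro c m hmS hm1 hm2 ψ g hbad
    exfalso; push_cast at hm2; omega
  | succ n ih =>
    intro c m hmS hm1 hm2 ψ g hbad
    rw [plist_succ, Module.End.mul_apply]
    by_cases h1 : f c = 1
    · rw [show zeta a b c (f c) = lad a b c true by simp [zeta, h1, cCr_eq_lad], lad_apply]
      by_cases hc : c ∈ Finset.Icc a b
      · rw [dif_pos hc]
        by_cases hg : g ⟨c, hc⟩ = true
        · rw [if_pos hg]
          by_cases hmc : m = c
          · exfalso
            have hxx : (⟨m, hmS⟩ : {x : ℤ // x ∈ Finset.Icc a b}) = ⟨c, hc⟩ :=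
              Subtype.ext hmc
            rcases hbad with ⟨hf', hgv⟩ | ⟨hf', hgv⟩
            · rw [hxx, hg] at hgv; exact absurd hgv (by simp)
            · rw [hmc] at hf'; omega
          · have hbad' : (f m = 1 ∧ (Function.update g ⟨c, hc⟩ (!true)) ⟨m, hmS⟩ = false) ∨
                (f m = -1 ∧ (Function.update g ⟨c, hc⟩ (!true)) ⟨m, hmS⟩ = true) := by
              rw [Function.update_of_ne (by simp [Subtype.ext_iff, hmc])]
              exact hbad
            rw [ih (c + 1) m hmS (by omega) (by push_cast at hm2 ⊢; omega) ψ _ hbad',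
              mul_zero]
        · rw [if_neg hg]
      · rw [dif_neg hc]
    · by_cases h2 : f c = -1
      · rw [show zeta a b c (f c) = lad a b c false by simp [zeta, h1, h2, cAnn_eq_lad], lad_apply]
        by_cases hc : c ∈ Finset.Icc a b
        · rw [dif_pos hc]
          by_cases hg : g ⟨c, hc⟩ = false
          · rw [if_pos hg]
            by_cases hmc : m = c
            · exfalso
              have hxx : (⟨m, hmS⟩ : {x : ℤ // x ∈ Finset.Icc a b}) = ⟨c, hc⟩ :=
                Subtype.ext hmc
              rcases hbad with ⟨hf', hgv⟩ | ⟨hf', hgv⟩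
              · rw [hmc] at hf'; omega
              · rw [hxx, hg] at hgv; exact absurd hgv (by simp)
            · have hbad' : (f m = 1 ∧ (Function.update g ⟨c, hc⟩ (!false)) ⟨m, hmS⟩ = false) ∨
                  (f m = -1 ∧ (Function.update g ⟨c, hc⟩ (!false)) ⟨m, hmS⟩ = true) := by
                rw [Function.update_of_ne (by simp [Subtype.ext_iff, hmc])]
                exact hbad
              rw [ih (c + 1) m hmS (by omega) (by push_cast at hm2 ⊢; omega) ψ _ hbad',
                mul_zero]
          · rw [if_neg hg]
        · rw [dif_neg hc]
      · rw [show zeta a b c (f c) = 0 by simp [zeta, h1, h2]]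
        simp

lemma triple_lad_cases (a b : ℤ) (j1 j2 j3 : ℤ) (v1 v2 v3 : Bool)
    (hj1 : j1 ∈ Finset.Icc a b) (hj2 : j2 ∈ Finset.Icc a b) (hj3 : j3 ∈ Finset.Icc a b)
    (h12 : j1 ≠ j2) (h13 : j1 ≠ j3) (h23 : j2 ≠ j3)
    (ψ : Hs a b) (g : Config a b) :
    ((lad a b j3 v3 * lad a b j2 v2 * lad a b j1 v1) ψ) g = 0 ∨
      (g ⟨j3, hj3⟩ = v3 ∧ g ⟨j2, hj2⟩ = v2 ∧ g ⟨j1, hj1⟩ = v1 ∧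
        ∃ s : ℂ, ((lad a b j3 v3 * lad a b j2 v2 * lad a b j1 v1) ψ) g
          = s * ψ (Function.update (Function.update (Function.update g ⟨j3, hj3⟩ (!v3))
              ⟨j2, hj2⟩ (!v2)) ⟨j1, hj1⟩ (!v1))) := by
  have n23 : (⟨j2, hj2⟩ : {x : ℤ // x ∈ Finset.Icc a b}) ≠ ⟨j3, hj3⟩ := by
    simp only [ne_eq, Subtype.mk.injEq]; exact h23
  have n13 : (⟨j1, hj1⟩ : {x : ℤ // x ∈ Finset.Icc a b}) ≠ ⟨j3, hj3⟩ := by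
    simp only [ne_eq, Subtype.mk.injEq]; exact h13
  have n12 : (⟨j1, hj1⟩ : {x : ℤ // x ∈ Finset.Icc a b}) ≠ ⟨j2, hj2⟩ := by
    simp only [ne_eq, Subtype.mk.injEq]; exact h12
  have e0 : ((lad a b j3 v3 * lad a b j2 v2 * lad a b j1 v1) ψ) g
      = lad a b j3 v3 ((lad a b j2 v2) ((lad a b j1 v1) ψ)) g := rfl
  rw [e0, lad_apply, dif_pos hj3]
  by_cases hg3 : g ⟨j3, hj3⟩ = v3
  swap
  · rw [if_neg hg3]; left; rfl
  rw [if_pos hg3, lad_apply, dif_pos hj2, Function.update_of_ne n23]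
  by_cases hg2 : g ⟨j2, hj2⟩ = v2
  swap
  · rw [if_neg hg2]; left; exact mul_zero _
  rw [if_pos hg2, lad_apply, dif_pos hj1, Function.update_of_ne n12, Function.update_of_ne n13]
  by_cases hg1 : g ⟨j1, hj1⟩ = v1
  swap
  · rw [if_neg hg1]; left; simp
  rw [if_pos hg1]
  refine Or.inr ⟨hg3, hg2, hg1,
    ⟨(-1) ^ signCount a b g j3
      * (-1) ^ signCount a b (Function.update g ⟨j3, hj3⟩ (!v3)) j2
      * (-1) ^ signCount a b (Function.update (Function.update g ⟨j3, hj3⟩ (!v3))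
          ⟨j2, hj2⟩ (!v2)) j1, by ring⟩⟩

lemma signCount_update_self (a b : ℤ) (g : Config a b) (j : ℤ) (hj : j ∈ Finset.Icc a b)
    (u : Bool) : signCount a b (Function.update g ⟨j, hj⟩ u) j = signCount a b g j := by
  have := signCount_update_add a b g j hj u j
  simp only [lt_irrefl, false_and, if_false] at this
  omega

lemma adjoint_lad (a b j : ℤ) (v : Bool) :
    LinearMap.adjoint (lad a b j v) = lad a b j (!v) := by
  symm
  rw [LinearMap.eq_adjoint_iff]
  intro x y
  by_cases hj : j ∈ Finset.Icc a b
  swap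
  · rw [lad_not_mem a b j (!v) hj, lad_not_mem a b j v hj]; simp
  rw [PiLp.inner_apply, PiLp.inner_apply]
  simp only [RCLike.inner_apply]
  have hτinv : Function.Involutive
      (fun g : Config a b => Function.update g ⟨j, hj⟩ (!(g ⟨j, hj⟩))) := by
    intro g
    dsimp only
    funext z
    by_cases hz : z = ⟨j, hj⟩
    · subst hz; simp
    · rw [Function.update_of_ne hz, Function.update_of_ne hz]
  refine Fintype.sum_bijective _ hτinv.bijective _ _ (fun g => ?_)
  by_cases hgv : g ⟨j, hj⟩ = !v
  · rw [lad_apply, dif_pos hj, if_pos hgv, lad_apply, dif_pos hj, hgv,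
      if_pos (by simp), Function.update_idem,
      show Function.update g ⟨j, hj⟩ (!v) = g from by rw [← hgv]; exact Function.update_eq_self _ _,
      signCount_update_self]
    simp only [Bool.not_not, map_mul, map_pow, map_neg, map_one]
    ring
  · have hgv2 : g ⟨j, hj⟩ = v := by
      cases hb : g ⟨j, hj⟩ <;> cases v <;> simp_all
    rw [lad_apply, dif_pos hj, if_neg hgv, lad_apply, dif_pos hj,
      if_neg (by rw [Function.update_self, hgv2]; cases v <;> simp)]
    simp

lemma lad_QF_anticomm (a b k l : ℤ) (hkl : k < l) (f : ℤ → ℤ) (j : ℤ) (w : Bool)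
    (hdisj : j < 2*k ∨ 2*l < j) :
    lad a b j w * QF a b k l f = -(QF a b k l f * lad a b j w) := by
  have hnval : ((2*l - 2*k + 1).toNat : ℤ) = 2*l - 2*k + 1 := Int.toNat_of_nonneg (by omega)
  unfold QF
  have hmem : ∀ z ∈ (List.map (fun m : ℤ => zeta a b (2*k + m) (f (2*k + m)))
      (do let a' ← List.range (2*l - 2*k + 1).toNat; pure ((a' : ℤ)))),
      lad a b j w * z = -(z * lad a b j w) := by
    intro z hz
    rw [List.mem_map] at hz
    obtain ⟨m, hm, rfl⟩ := hz
    rw [castlist_eq_map, List.mem_map] at hm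
    obtain ⟨m', hm', rfl⟩ := hm
    rw [List.mem_range] at hm'
    have hbound : 0 ≤ (m' : ℤ) ∧ (m' : ℤ) ≤ 2*l - 2*k := by
      constructor
      · positivity
      · have := (Int.ofNat_lt.mpr hm')
        omega
    have hne : j ≠ 2*k + (m' : ℤ) := by omega
    by_cases hv1 : f (2*k + (m' : ℤ)) = 1
    · rw [show zeta a b (2*k + (m' : ℤ)) (f (2*k + (m' : ℤ))) = lad a b (2*k + (m' : ℤ)) true
        by simp [zeta, hv1, cCr_eq_lad]]
      exact lad_anticomm a b j (2*k + (m' : ℤ)) hne w true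
    · by_cases hv2 : f (2*k + (m' : ℤ)) = -1
      · rw [show zeta a b (2*k + (m' : ℤ)) (f (2*k + (m' : ℤ))) = lad a b (2*k + (m' : ℤ)) false
          by simp [zeta, hv1, hv2, cAnn_eq_lad]]
        exact lad_anticomm a b j (2*k + (m' : ℤ)) hne w false
      · rw [show zeta a b (2*k + (m' : ℤ)) (f (2*k + (m' : ℤ))) = 0
          by simp [zeta, hv1, hv2]]
        simp
  have hlen : Odd (List.map (fun m : ℤ => zeta a b (2*k + m) (f (2*k + m)))
      (do let a' ← List.range (2*l - 2*k + 1).toNat; pure ((a' : ℤ)))).length := by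
    rw [List.length_map, castlist_eq_map, List.length_map, List.length_range]
    have : Odd ((2*l - 2*k + 1).toNat : ℤ) := ⟨l - k, by omega⟩
    exact Int.odd_coe_nat _ |>.mp this
  exact (mul_prod_anticomm _ _ hmem).1 hlen

lemma adjoint_qOp (a b i : ℤ) :
    LinearMap.adjoint (qOp a b i)
      = lad a b (2*i-1) true * lad a b (2*i) false * lad a b (2*i+1) true := by
  rw [qOp_eq_lad, Module.End.mul_eq_comp, Module.End.mul_eq_comp, LinearMap.adjoint_comp,
    LinearMap.adjoint_comp, adjoint_lad, adjoint_lad, adjoint_lad]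
  simp only [Bool.not_false, Bool.not_true]
  rfl

/-- `q_{2i}` and `q_{2i}*` anticommute with the local fermion
operator `Q(f)` whenever `{2i−1, 2i, 2i+1} ⊆ S`. -/
theorem q_anticommutes_with_local_charge (a b k l : ℤ) (hkl : k < l)
    (hS : Finset.Icc (2 * k) (2 * l) ⊆ Finset.Icc a b)
    (f : ℤ → ℤ) (hf : memXi k l f) (i : ℤ)
    (hi : Finset.Icc (2 * i - 1) (2 * i + 1) ⊆ Finset.Icc a b) :
    qOp a b i * QF a b k l f + QF a b k l f * qOp a b i = 0 ∧
    LinearMap.adjoint (qOp a b i) * QF a b k l f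
      + QF a b k l f * LinearMap.adjoint (qOp a b i) = 0 := by
  obtain ⟨hf1, hf2, hf3, hf4⟩ := hf
  have h1 : 2*i-1 ∈ Finset.Icc a b := hi (by rw [Finset.mem_Icc]; omega)
  have h2 : 2*i ∈ Finset.Icc a b := hi (by rw [Finset.mem_Icc]; omega)
  have h3 : 2*i+1 ∈ Finset.Icc a b := hi (by rw [Finset.mem_Icc]; omega)
  have hnval : (((2*l - 2*k + 1).toNat : ℕ) : ℤ) = 2*l - 2*k + 1 :=
    Int.toNat_of_nonneg (by omega)
  have hQ : QF a b k l f = plist a b f (2*k) (2*l - 2*k + 1).toNat := QF_eq_plist a b k l f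
  have hadj := adjoint_qOp a b i
  by_cases hover : k ≤ i ∧ i ≤ l
  case neg =>
    -- disjoint case
    have hd : ∀ m : ℤ, m = 2*i-1 ∨ m = 2*i ∨ m = 2*i+1 → (m < 2*k ∨ 2*l < m) := by
      intro m hm; omega
    have hA : ∀ w : Bool, lad a b (2*i+1) w * QF a b k l f
        = -(QF a b k l f * lad a b (2*i+1) w) :=
      fun w => lad_QF_anticomm a b k l hkl f (2*i+1) w (hd _ (by omega))
    have hB : ∀ w : Bool, lad a b (2*i) w * QF a b k l f
        = -(QF a b k l f * lad a b (2*i) w) :=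
      fun w => lad_QF_anticomm a b k l hkl f (2*i) w (hd _ (by omega))
    have hC : ∀ w : Bool, lad a b (2*i-1) w * QF a b k l f
        = -(QF a b k l f * lad a b (2*i-1) w) :=
      fun w => lad_QF_anticomm a b k l hkl f (2*i-1) w (hd _ (by omega))
    constructor
    · rw [qOp_eq_lad,
        triple_anticomm _ _ _ _ (hA false) (hB true) (hC false), neg_add_cancel]
    · rw [hadj,
        triple_anticomm _ _ _ _ (hC true) (hB false) (hA true), neg_add_cancel]
  case pos =>
    obtain ⟨hki, hil⟩ := hover
    -- value facts
    have hv1 : f (2*i-1) = 1 ∨ f (2*i-1) = -1 ∨ i = k := by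
      by_cases h : i = k
      · tauto
      · rcases hf1 (2*i-1) (by rw [Finset.mem_Icc]; omega) with h' | h' <;> tauto
    have z1 : qOp a b i * QF a b k l f = 0 := by
      apply LinearMap.ext; intro ψ
      rw [Module.End.mul_apply, LinearMap.zero_apply]
      ext g
      show (qOp a b i) (QF a b k l f ψ) g = (0 : ℂ)
      rw [qOp_eq_lad]
      rcases triple_lad_cases a b (2*i-1) (2*i) (2*i+1) false true false h1 h2 h3
        (by omega) (by omega) (by omega) (QF a b k l f ψ) g with h0 | ⟨hg3, hg2, hg1, s, hs⟩
      · exact h0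
      · rw [hs]
        set tri := Function.update (Function.update (Function.update g ⟨2*i+1, h3⟩ (!false))
          ⟨2*i, h2⟩ (!true)) ⟨2*i-1, h1⟩ (!false) with htri
        have htri1 : tri ⟨2*i-1, h1⟩ = true := by
          rw [htri, Function.update_self] <;> rfl
        have htri2 : tri ⟨2*i, h2⟩ = false := by
          rw [htri, Function.update_of_ne (by simp only [ne_eq, Subtype.mk.injEq]; omega),
            Function.update_self] <;> rfl
        have htri3 : tri ⟨2*i+1, h3⟩ = true := by
          rw [htri, Function.update_of_ne (by simp only [ne_eq, Subtype.mk.injEq]; omega),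
            Function.update_of_ne (by simp only [ne_eq, Subtype.mk.injEq]; omega),
            Function.update_self] <;> rfl
        have hzero : (QF a b k l f ψ) tri = 0 := by
          rw [hQ]
          by_cases hik : i = k
          · rcases hf1 (2*k) (by rw [Finset.mem_Icc]; omega) with hv | hv
            · exact plist_bad a b f _ (2*k) (2*i) h2 (by omega) (by omega) ψ tri
                (Or.inl ⟨by rw [hik]; exact hv, htri2⟩)
            · exact plist_bad a b f _ (2*k) (2*i+1) h3 (by omega) (by omega) ψ tri
                (Or.inr ⟨by rw [hik, ← hf3]; exact hv, htri3⟩)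
          · by_cases hil' : i = l
            · rcases hf1 (2*l) (by rw [Finset.mem_Icc]; omega) with hv | hv
              · exact plist_bad a b f _ (2*k) (2*i) h2 (by omega) (by omega) ψ tri
                  (Or.inl ⟨by rw [hil']; exact hv, htri2⟩)
              · exact plist_bad a b f _ (2*k) (2*i-1) h1 (by omega) (by omega) ψ tri
                  (Or.inr ⟨by rw [hil', hf4]; exact hv, htri1⟩)
            · -- interior
              have hklt : k < i := by omega
              have hllt : i < l := by omega
              rcases hf1 (2*i-1) (by rw [Finset.mem_Icc]; omega) with ha | ha
              · rcases hf1 (2*i) (by rw [Finset.mem_Icc]; omega) with hb | hb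
                · exact plist_bad a b f _ (2*k) (2*i) h2 (by omega) (by omega) ψ tri
                    (Or.inl ⟨hb, htri2⟩)
                · rcases hf1 (2*i+1) (by rw [Finset.mem_Icc]; omega) with hc | hc
                  · exact absurd ⟨ha, hb, hc⟩ (hf2 i hklt hllt).2
                  · exact plist_bad a b f _ (2*k) (2*i+1) h3 (by omega) (by omega) ψ tri
                      (Or.inr ⟨hc, htri3⟩)
              · exact plist_bad a b f _ (2*k) (2*i-1) h1 (by omega) (by omega) ψ tri
                  (Or.inr ⟨ha, htri1⟩)
        rw [hzero, mul_zero]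
    have z3 : LinearMap.adjoint (qOp a b i) * QF a b k l f = 0 := by
      apply LinearMap.ext; intro ψ
      rw [Module.End.mul_apply, LinearMap.zero_apply]
      ext g
      show (LinearMap.adjoint (qOp a b i)) (QF a b k l f ψ) g = (0 : ℂ)
      rw [hadj]
      rcases triple_lad_cases a b (2*i+1) (2*i) (2*i-1) true false true h3 h2 h1
        (by omega) (by omega) (by omega) (QF a b k l f ψ) g with h0 | ⟨hg3, hg2, hg1, s, hs⟩
      · exact h0
      · rw [hs]
        set tri := Function.update (Function.update (Function.update g ⟨2*i-1, h1⟩ (!true))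
          ⟨2*i, h2⟩ (!false)) ⟨2*i+1, h3⟩ (!true) with htri
        have htri1 : tri ⟨2*i-1, h1⟩ = false := by
          rw [htri, Function.update_of_ne (by simp only [ne_eq, Subtype.mk.injEq]; omega),
            Function.update_of_ne (by simp only [ne_eq, Subtype.mk.injEq]; omega),
            Function.update_self] <;> rfl
        have htri2 : tri ⟨2*i, h2⟩ = true := by
          rw [htri, Function.update_of_ne (by simp only [ne_eq, Subtype.mk.injEq]; omega),
            Function.update_self] <;> rfl
        have htri3 : tri ⟨2*i+1, h3⟩ = false := by
          rw [htri, Function.update_self] <;> rfl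
        have hzero : (QF a b k l f ψ) tri = 0 := by
          rw [hQ]
          by_cases hik : i = k
          · rcases hf1 (2*k) (by rw [Finset.mem_Icc]; omega) with hv | hv
            · exact plist_bad a b f _ (2*k) (2*i+1) h3 (by omega) (by omega) ψ tri
                (Or.inl ⟨by rw [hik, ← hf3]; exact hv, htri3⟩)
            · exact plist_bad a b f _ (2*k) (2*i) h2 (by omega) (by omega) ψ tri
                (Or.inr ⟨by rw [hik]; exact hv, htri2⟩)
          · by_cases hil' : i = l
            · rcases hf1 (2*l) (by rw [Finset.mem_Icc]; omega) with hv | hv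
              · exact plist_bad a b f _ (2*k) (2*i-1) h1 (by omega) (by omega) ψ tri
                  (Or.inl ⟨by rw [hil', hf4]; exact hv, htri1⟩)
              · exact plist_bad a b f _ (2*k) (2*i) h2 (by omega) (by omega) ψ tri
                  (Or.inr ⟨by rw [hil']; exact hv, htri2⟩)
            · have hklt : k < i := by omega
              have hllt : i < l := by omega
              rcases hf1 (2*i-1) (by rw [Finset.mem_Icc]; omega) with ha | ha
              · exact plist_bad a b f _ (2*k) (2*i-1) h1 (by omega) (by omega) ψ tri
                  (Or.inl ⟨ha, htri1⟩)
              · rcases hf1 (2*i) (by rw [Finset.mem_Icc]; omega) with hb | hb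
                · rcases hf1 (2*i+1) (by rw [Finset.mem_Icc]; omega) with hc | hc
                  · exact plist_bad a b f _ (2*k) (2*i+1) h3 (by omega) (by omega) ψ tri
                      (Or.inl ⟨hc, htri3⟩)
                  · exact absurd ⟨ha, hb, hc⟩ (hf2 i hklt hllt).1
                · exact plist_bad a b f _ (2*k) (2*i) h2 (by omega) (by omega) ψ tri
                    (Or.inr ⟨hb, htri2⟩)
        rw [hzero, mul_zero]
    have hcanon : ∀ (g : Config a b) (m : ℤ) (hm : m ∈ Finset.Icc a b), 2*k ≤ m → m ≤ 2*l →
        canon a b f (2*k) (2*l - 2*k + 1).toNat g ⟨m, hm⟩ = !(decide (f m = 1)) := by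
      intro g m hm hm1 hm2
      simp only [canon]
      have hlt : m < 2*k + (((2*l - 2*k + 1).toNat : ℕ) : ℤ) := by rw [hnval]; omega
      rw [if_pos ⟨hm1, hlt⟩]
    have z2 : QF a b k l f * qOp a b i = 0 := by
      apply LinearMap.ext; intro ψ
      rw [Module.End.mul_apply, LinearMap.zero_apply]
      ext g
      show (QF a b k l f) (qOp a b i ψ) g = (0 : ℂ)
      rw [hQ]
      rcases plist_struct a b f _ (2*k) (qOp a b i ψ) g with h0 | ⟨s, hs⟩
      · exact h0
      · rw [hs]
        have hzero : (qOp a b i ψ) (canon a b f (2*k) (2*l - 2*k + 1).toNat g) = 0 := by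
          rw [qOp_eq_lad]
          rcases triple_lad_cases a b (2*i-1) (2*i) (2*i+1) false true false h1 h2 h3
            (by omega) (by omega) (by omega) ψ (canon a b f (2*k) (2*l - 2*k + 1).toNat g) with h0 | ⟨hg1, hg2, hg3, _, _⟩
          · exact h0
          · -- hg3 : cg (2i+1) = false, hg2 : cg (2i) = true, hg1 : cg (2i-1) = false
            exfalso
            by_cases hik : i = k
            · have e2 : f (2*i) = -1 := by
                have := hcanon g (2*i) h2 (by omega) (by omega)
                rw [hg2] at this
                rcases hf1 (2*i) (by rw [Finset.mem_Icc]; omega) with h' | h'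
                · rw [h'] at this; simp at this
                · exact h'
              have e3 : f (2*i+1) = 1 := by
                have := hcanon g (2*i+1) h3 (by omega) (by omega)
                rw [hg1] at this
                simpa using this
              rw [hik] at e2 e3
              rw [hf3] at e2
              omega
            · by_cases hil' : i = l
              · have e1 : f (2*i-1) = 1 := by
                  have := hcanon g (2*i-1) h1 (by omega) (by omega)
                  rw [hg3] at this
                  simpa using this
                have e2 : f (2*i) = -1 := by
                  have := hcanon g (2*i) h2 (by omega) (by omega)
                  rw [hg2] at this
                  rcases hf1 (2*i) (by rw [Finset.mem_Icc]; omega) with h' | h'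
                  · rw [h'] at this; simp at this
                  · exact h'
                rw [hil'] at e1 e2
                rw [hf4] at e1
                omega
              · have e1 : f (2*i-1) = 1 := by
                  have := hcanon g (2*i-1) h1 (by omega) (by omega)
                  rw [hg3] at this
                  simpa using this
                have e2 : f (2*i) = -1 := by
                  have := hcanon g (2*i) h2 (by omega) (by omega)
                  rw [hg2] at this
                  rcases hf1 (2*i) (by rw [Finset.mem_Icc]; omega) with h' | h'
                  · rw [h'] at this; simp at this
                  · exact h'
                have e3 : f (2*i+1) = 1 := by
                  have := hcanon g (2*i+1) h3 (by omega) (by omega)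
                  rw [hg1] at this
                  simpa using this
                exact (hf2 i (by omega) (by omega)).2 ⟨e1, e2, e3⟩
        rw [hzero]
        simp
    have z4 : QF a b k l f * LinearMap.adjoint (qOp a b i) = 0 := by
      apply LinearMap.ext; intro ψ
      rw [Module.End.mul_apply, LinearMap.zero_apply]
      ext g
      show (QF a b k l f) (LinearMap.adjoint (qOp a b i) ψ) g = (0 : ℂ)
      rw [hQ]
      rcases plist_struct a b f _ (2*k) (LinearMap.adjoint (qOp a b i) ψ) g with h0 | ⟨s, hs⟩
      · exact h0
      · rw [hs]
        have hzero : (LinearMap.adjoint (qOp a b i) ψ)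
            (canon a b f (2*k) (2*l - 2*k + 1).toNat g) = 0 := by
          rw [hadj]
          rcases triple_lad_cases a b (2*i+1) (2*i) (2*i-1) true false true h3 h2 h1
            (by omega) (by omega) (by omega) ψ (canon a b f (2*k) (2*l - 2*k + 1).toNat g) with h0 | ⟨hg3, hg2, hg1, _, _⟩
          · exact h0
          · -- hg3 : cg (2i-1) = true, hg2 : cg (2i) = false, hg1 : cg (2i+1) = true
            exfalso
            by_cases hik : i = k
            · have e2 : f (2*i) = 1 := by
                have := hcanon g (2*i) h2 (by omega) (by omega)
                rw [hg2] at this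
                simpa using this
              have e3 : f (2*i+1) = -1 := by
                have := hcanon g (2*i+1) h3 (by omega) (by omega)
                rw [hg1] at this
                rcases hf1 (2*i+1) (by rw [Finset.mem_Icc]; omega) with h' | h'
                · rw [h'] at this; simp at this
                · exact h'
              rw [hik] at e2 e3
              rw [hf3] at e2
              omega
            · by_cases hil' : i = l
              · have e1 : f (2*i-1) = -1 := by
                  have := hcanon g (2*i-1) h1 (by omega) (by omega)
                  rw [hg3] at this
                  rcases hf1 (2*i-1) (by rw [Finset.mem_Icc]; omega) with h' | h'
                  · rw [h'] at this; simp at this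
                  · exact h'
                have e2 : f (2*i) = 1 := by
                  have := hcanon g (2*i) h2 (by omega) (by omega)
                  rw [hg2] at this
                  simpa using this
                rw [hil'] at e1 e2
                rw [hf4] at e1
                omega
              · have e1 : f (2*i-1) = -1 := by
                  have := hcanon g (2*i-1) h1 (by omega) (by omega)
                  rw [hg3] at this
                  rcases hf1 (2*i-1) (by rw [Finset.mem_Icc]; omega) with h' | h'
                  · rw [h'] at this; simp at this
                  · exact h'
                have e2 : f (2*i) = 1 := by
                  have := hcanon g (2*i) h2 (by omega) (by omega)
                  rw [hg2] at this
                  simpa using this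
                have e3 : f (2*i+1) = -1 := by
                  have := hcanon g (2*i+1) h3 (by omega) (by omega)
                  rw [hg1] at this
                  rcases hf1 (2*i+1) (by rw [Finset.mem_Icc]; omega) with h' | h'
                  · rw [h'] at this; simp at this
                  · exact h'
                exact (hf2 i (by omega) (by omega)).1 ⟨e1, e2, e3⟩
        rw [hzero]
        simp
    exact ⟨by rw [z1, z2, add_zero], by rw [z3, z4, add_zero]⟩


end Nicolai
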